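/- The G-BP objective is a lower bound on the true partition function: Let a Forney-style GM have nonnegative factors and partition function Z. For any gauge transformation 𝒢 with G_{ab}ᵀG_{ba}=I on every edge such that every transformed factor satisfies f_{a,𝒢}(x_a)≥0 for all x_a, the weight of the all-zero configuration satisfies ∏_{a∈V} f_{a,𝒢}(0,0,…,0) ≤ Z. -/
import Mathlib


/- STATEMENT 3: The G-BP objective is a lower bound on the true partition
function.  Forney-style GM encoding as in Statement 0.  For a GM with
nonnegative factors and any gauge transformation 𝒢 (satisfying
`G_{ab}ᵀ G_{ba} = 1` on every edge) whose transformed factors are all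
nonnegative, the weight of the all-zero configuration satisfies
`∏_{a∈V} f_{a,𝒢}(0,…,0) ≤ Z`. -/

open Matrix

/-- The gauge transformed factor `f_{a,𝒢}`. -/
noncomputable def gaugedFactor {V E : Type*} [Fintype E] [DecidableEq V] [DecidableEq E]
    (ends : E → V × V) (f : V → (E → Fin 2) → ℝ)
    (𝒢 : E → Bool → Matrix (Fin 2) (Fin 2) ℝ) (a : V) (x : E → Fin 2) : ℝ :=
  ∑ y : E → Fin 2, f a y *
    ∏ e : E,
      if a = (ends e).1 then 𝒢 e false (x e) (y e)
      else if a = (ends e).2 then 𝒢 e true (x e) (y e)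
      else if x e = y e then 1 else 0

theorem gauge_invariance
    {V E : Type*} [Fintype V] [Fintype E] [DecidableEq V] [DecidableEq E]
    (ends : E → V × V) (hsimple : ∀ e, (ends e).1 ≠ (ends e).2)
    (f : V → (E → Fin 2) → ℝ)
    (hdep : ∀ a (x y : E → Fin 2),
      (∀ e, (a = (ends e).1 ∨ a = (ends e).2) → x e = y e) → f a x = f a y)
    (𝒢 : E → Bool → Matrix (Fin 2) (Fin 2) ℝ)
    (hG : ∀ e, (𝒢 e false)ᵀ * 𝒢 e true = 1) :
    ∑ x : E → Fin 2, ∏ a : V, gaugedFactor ends f 𝒢 a x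
      = ∑ x : E → Fin 2, ∏ a : V, f a x := by
  classical
  set M : V → E → Fin 2 → Fin 2 → ℝ := fun a e t s =>
    if a = (ends e).1 then 𝒢 e false t s
    else if a = (ends e).2 then 𝒢 e true t s
    else if t = s then 1 else 0 with hM
  have hgf : ∀ a x, gaugedFactor ends f 𝒢 a x
      = ∑ y : E → Fin 2, f a y * ∏ e, M a e (x e) (y e) := fun a x => rfl
  -- canonical representative of z on vertices
  set w : (E → Fin 2 × Fin 2) → V → E → Fin 2 := fun z a e =>
    if a = (ends e).1 then (z e).1 else if a = (ends e).2 then (z e).2 else 0 with hw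
  -- Step 2: per-x identity
  have step2 : ∀ x : E → Fin 2,
      (∑ Y : V → E → Fin 2, ∏ a, (f a (Y a) * ∏ e, M a e (x e) (Y a e)))
      = ∑ z : E → Fin 2 × Fin 2, (∏ a, f a (w z a)) *
          ∏ e, (𝒢 e false (x e) (z e).1 * 𝒢 e true (x e) (z e).2) := by
    intro x
    -- restrict to canonical Y
    have hrestrict :
        (∑ Y : V → E → Fin 2, ∏ a, (f a (Y a) * ∏ e, M a e (x e) (Y a e)))
        = ∑ Y ∈ Finset.univ.filter
            (fun Y : V → E → Fin 2 => ∀ a e, a ≠ (ends e).1 → a ≠ (ends e).2 → Y a e = x e),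
            ∏ a, (f a (Y a) * ∏ e, M a e (x e) (Y a e)) := by
      refine (Finset.sum_filter_of_ne ?_).symm
      intro Y _ hne
      by_contra hP
      push_neg at hP
      obtain ⟨a, e, ha1, ha2, hval⟩ := hP
      apply hne
      apply Finset.prod_eq_zero (Finset.mem_univ a)
      have : M a e (x e) (Y a e) = 0 := by
        simp only [hM, if_neg ha1, if_neg ha2]
        exact if_neg (fun h => hval h.symm) |>.trans rfl
      rw [Finset.prod_eq_zero (Finset.mem_univ e) this, mul_zero]
    rw [hrestrict]
    refine Finset.sum_nbij' (i := fun Y => fun e => (Y (ends e).1 e, Y (ends e).2 e))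
      (j := fun z => fun a e =>
        if a = (ends e).1 then (z e).1 else if a = (ends e).2 then (z e).2 else x e)
      (fun Y _ => Finset.mem_univ _) ?_ ?_ ?_ ?_
    · intro z _
      simp only [Finset.mem_filter, Finset.mem_univ, true_and]
      intro a e ha1 ha2
      simp [if_neg ha1, if_neg ha2]
    · intro Y hY
      simp only [Finset.mem_filter, Finset.mem_univ, true_and] at hY
      funext a e
      by_cases h1 : a = (ends e).1
      · subst h1; simp
      · by_cases h2 : a = (ends e).2
        · subst h2; simp [if_neg (Ne.symm (hsimple e))]
        · simp [if_neg h1, if_neg h2, hY a e h1 h2]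
    · intro z _
      funext e
      refine Prod.ext ?_ ?_
      · simp
      · simp [if_neg (Ne.symm (hsimple e))]
    · intro Y hY
      simp only [Finset.mem_filter, Finset.mem_univ, true_and] at hY
      rw [Finset.prod_mul_distrib]
      congr 1
      · refine Finset.prod_congr rfl fun a _ => ?_
        refine hdep a _ _ fun e he => ?_
        rcases he with h1 | h1
        · subst h1; simp [hw]
        · rw [h1]; simp [hw, if_neg (Ne.symm (hsimple e))]
      · rw [Finset.prod_comm]
        refine Finset.prod_congr rfl fun e _ => ?_
        have huv : (ends e).2 ∈ Finset.univ.erase (ends e).1 :=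
          Finset.mem_erase.2 ⟨Ne.symm (hsimple e), Finset.mem_univ _⟩
        rw [← Finset.mul_prod_erase Finset.univ _ (Finset.mem_univ (ends e).1),
            ← Finset.mul_prod_erase _ _ huv]
        have h1 : M (ends e).1 e (x e) (Y (ends e).1 e) = 𝒢 e false (x e) (Y (ends e).1 e) := by
          simp [hM]
        have h2 : M (ends e).2 e (x e) (Y (ends e).2 e) = 𝒢 e true (x e) (Y (ends e).2 e) := by
          simp [hM, if_neg (Ne.symm (hsimple e))]
        rw [h1, h2]
        have h3 : ∀ a ∈ (Finset.univ.erase (ends e).1).erase (ends e).2,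
            M a e (x e) (Y a e) = 1 := by
          intro a ha
          have ha2 := (Finset.mem_erase.1 ha).1
          have ha1 := (Finset.mem_erase.1 (Finset.mem_erase.1 ha).2).1
          simp [hM, if_neg ha1, if_neg ha2, hY a e ha1 ha2]
        rw [Finset.prod_eq_one h3, mul_one]
  -- main chain
  calc ∑ x : E → Fin 2, ∏ a : V, gaugedFactor ends f 𝒢 a x
      = ∑ x : E → Fin 2, ∑ Y : V → E → Fin 2,
          ∏ a, (f a (Y a) * ∏ e, M a e (x e) (Y a e)) := by
        refine Finset.sum_congr rfl fun x _ => ?_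
        simp only [hgf]
        exact Fintype.prod_sum _
    _ = ∑ x : E → Fin 2, ∑ z : E → Fin 2 × Fin 2, (∏ a, f a (w z a)) *
          ∏ e, (𝒢 e false (x e) (z e).1 * 𝒢 e true (x e) (z e).2) := by
        exact Finset.sum_congr rfl fun x _ => step2 x
    _ = ∑ z : E → Fin 2 × Fin 2, (∏ a, f a (w z a)) *
          ∏ e, (if (z e).1 = (z e).2 then (1:ℝ) else 0) := by
        rw [Finset.sum_comm]
        refine Finset.sum_congr rfl fun z _ => ?_
        rw [← Finset.mul_sum]
        congr 1
        rw [← Fintype.prod_sum (fun e t => 𝒢 e false t (z e).1 * 𝒢 e true t (z e).2)]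
        refine Finset.prod_congr rfl fun e _ => ?_
        have := congrArg (fun A => A (z e).1 (z e).2) (hG e)
        simpa [Matrix.mul_apply, Matrix.transpose_apply, Matrix.one_apply] using this
    _ = ∑ x : E → Fin 2, ∏ a : V, f a x := by
        rw [← Finset.sum_filter_of_ne (p := fun z : E → Fin 2 × Fin 2 => ∀ e, (z e).1 = (z e).2)]
        · refine Finset.sum_nbij' (i := fun z => fun e => (z e).1)
            (j := fun s => fun e => (s e, s e))
            (fun z _ => Finset.mem_univ _) ?_ ?_ ?_ ?_
          · intro s _
            simp
          · intro z hz
            simp only [Finset.mem_filter, Finset.mem_univ, true_and] at hz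
            funext e
            exact Prod.ext rfl (hz e)
          · intro s _; rfl
          · intro z hz
            simp only [Finset.mem_filter, Finset.mem_univ, true_and] at hz
            rw [Finset.prod_eq_one (fun e _ => if_pos (hz e)), mul_one]
            refine Finset.prod_congr rfl fun a _ => ?_
            refine hdep a _ _ fun e he => ?_
            rcases he with h1 | h1
            · subst h1; simp [hw]
            · rw [h1]; simp [hw, if_neg (Ne.symm (hsimple e)), hz e]
        · intro z _ hne
          by_contra hz
          push_neg at hz
          obtain ⟨e, he⟩ := hz
          have hzero : (∏ e : E, if (z e).1 = (z e).2 then (1:ℝ) else 0) = 0 :=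
            Finset.prod_eq_zero (Finset.mem_univ e) (if_neg he)
          exact hne (by rw [hzero, mul_zero])

/-- **G-BP lower bound**: `∏_{a∈V} f_{a,𝒢}(0,0,…,0) ≤ Z`. -/
theorem gbp_zero_weight_le_partition
    {V E : Type*} [Fintype V] [Fintype E] [DecidableEq V] [DecidableEq E]
    (ends : E → V × V) (hsimple : ∀ e, (ends e).1 ≠ (ends e).2)
    (f : V → (E → Fin 2) → ℝ) (hf : ∀ a x, 0 ≤ f a x)
    (hdep : ∀ a (x y : E → Fin 2),
      (∀ e, (a = (ends e).1 ∨ a = (ends e).2) → x e = y e) → f a x = f a y)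
    (𝒢 : E → Bool → Matrix (Fin 2) (Fin 2) ℝ)
    (hG : ∀ e, (𝒢 e false)ᵀ * 𝒢 e true = 1)
    (hfG : ∀ a x, 0 ≤ gaugedFactor ends f 𝒢 a x) :
    ∏ a : V, gaugedFactor ends f 𝒢 a (fun _ => 0)
      ≤ ∑ x : E → Fin 2, ∏ a : V, f a x := by

  calc ∏ a : V, gaugedFactor ends f 𝒢 a (fun _ => 0)
      ≤ ∑ x : E → Fin 2, ∏ a : V, gaugedFactor ends f 𝒢 a x :=
        Finset.single_le_sum (f := fun x => ∏ a : V, gaugedFactor ends f 𝒢 a x)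
          (fun x _ => Finset.prod_nonneg fun a _ => hfG a x) (Finset.mem_univ _)
    _ = ∑ x : E → Fin 2, ∏ a : V, f a x :=
        gauge_invariance ends hsimple f hdep 𝒢 hG
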